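/- Let Γ be a Borel probability measure on [0,1]². For every δ > 0 there exist h ∈ ℕ, a partition [0,1] = J₁ ∪ … ∪ J_h into intervals, and a measurable set X ⊆ [0,1] with λ(X) < δ, such that for a disintegration {Γ_x} of Γ along the first coordinate, for all i ∈ [h] and all x, y ∈ J_i \ X, the Lévy–Prokhorov distance between Γ_x and Γ_y is less than δ. -/

import Mathlib

open MeasureTheory Set Metric
open scoped ENNReal

private lemma lp_key (μ ν : Measure ℝ) [IsProbabilityMeasure μ] [IsProbabilityMeasure ν]
    {δ : ℝ} (hδ : 0 < δ) (n : ℕ)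
    (htail : μ (Ioc (-((n:ℝ)*(δ/4))) ((n:ℝ)*(δ/4)))ᶜ ≤ ENNReal.ofReal (δ/4))
    (hclose : ∀ j : ℤ, -(n:ℤ) ≤ j → j < (n:ℤ) →
      μ (Ioc ((j:ℝ)*(δ/4)) (((j:ℝ)+1)*(δ/4)))
        ≤ ν (Ioc ((j:ℝ)*(δ/4)) (((j:ℝ)+1)*(δ/4))) + ENNReal.ofReal (δ/(16*(n:ℝ)+16))) :
    levyProkhorovDist μ ν ≤ δ/2 := by
  classical
  set a : ℝ := δ/4 with ha_def
  have ha : 0 < a := by positivity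
  set η : ℝ := δ/(16*(n:ℝ)+16) with hη_def
  have hη : 0 < η := by positivity
  apply levyProkhorovDist_le_of_forall_le μ ν (by positivity)
  intro ε B hε hB
  set I : ℤ → Set ℝ := fun j => Ioc ((j:ℝ)*a) (((j:ℝ)+1)*a) with hI_def
  set T : Set ℝ := Ioc (-((n:ℝ)*a)) ((n:ℝ)*a) with hT_def
  set S : Finset ℤ := (Finset.Icc (-(n:ℤ)) ((n:ℤ)-1)).filter (fun j => (I j ∩ B).Nonempty) with hS_def
  -- B ∩ T ⊆ ⋃ j ∈ S, I j
  have hsub : B ∩ T ⊆ ⋃ j ∈ S, I j := by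
    intro z ⟨hzB, hzT⟩
    have hz1 : -((n:ℝ)*a) < z := hzT.1
    have hz2 : z ≤ (n:ℝ)*a := hzT.2
    set j : ℤ := ⌈z/a⌉ - 1 with hj_def
    have hj1 : (j:ℝ) < z/a := by
      have := Int.ceil_lt_add_one (z/a)
      push_cast [hj_def]
      linarith
    have hj2 : z/a ≤ (j:ℝ) + 1 := by
      have := Int.le_ceil (z/a)
      push_cast [hj_def]
      linarith
    have hzI : z ∈ I j := by
      refine ⟨(lt_div_iff₀ ha).mp hj1, ?_⟩
      have := (div_le_iff₀ ha).mp hj2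
      linarith
    have hjmem : j ∈ S := by
      rw [hS_def, Finset.mem_filter, Finset.mem_Icc]
      refine ⟨⟨?_, ?_⟩, ⟨z, hzI, hzB⟩⟩
      · -- -(n:ℤ) ≤ j
        have h1 : -(n:ℝ) < z/a := by
          rw [lt_div_iff₀ ha]; nlinarith
        have : -(n:ℝ) < (⌈z/a⌉ : ℝ) := lt_of_lt_of_le h1 (Int.le_ceil _)
        have : -(n:ℤ) < ⌈z/a⌉ := by exact_mod_cast this
        omega
      · -- j ≤ n - 1
        have h1 : z/a ≤ (n:ℝ) := by
          rw [div_le_iff₀ ha]; nlinarith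
        have : ⌈z/a⌉ ≤ (n:ℤ) := Int.ceil_le.mpr (by exact_mod_cast h1)
        omega
    exact mem_biUnion hjmem hzI
  have hImeas : ∀ j : ℤ, MeasurableSet (I j) := fun j => measurableSet_Ioc
  have hIdisj : (↑S : Set ℤ).PairwiseDisjoint I := by
    intro j _ k _ hjk
    simp only [I, Function.onFun]
    rw [Set.Ioc_disjoint_Ioc]
    rcases lt_or_gt_of_ne hjk with h | h
    · have : (j:ℝ) + 1 ≤ (k:ℝ) := by exact_mod_cast h
      apply le_trans (min_le_left _ _)
      apply le_trans _ (le_max_right _ _)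
      nlinarith
    · have : (k:ℝ) + 1 ≤ (j:ℝ) := by exact_mod_cast h
      apply le_trans (min_le_right _ _)
      apply le_trans _ (le_max_left _ _)
      nlinarith
  -- each I j with j ∈ S is inside thickening ε B
  have hthick : (⋃ j ∈ S, I j) ⊆ thickening ε B := by
    intro y hy
    obtain ⟨j, hjS, hyI⟩ := Set.mem_iUnion₂.mp hy
    rw [hS_def, Finset.mem_filter] at hjS
    obtain ⟨z, hzI, hzB⟩ := hjS.2
    rw [mem_thickening_iff]
    refine ⟨z, hzB, ?_⟩
    have h1 : |y - z| ≤ a := by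
      rw [abs_le]
      constructor
      · have := hyI.1; have := hzI.2; nlinarith [hzI.2, hyI.1]
      · have := hyI.2; have := hzI.1; nlinarith
    calc dist y z = |y - z| := Real.dist_eq y z
      _ ≤ a := h1
      _ < ε := by rw [ha_def]; linarith
  -- main estimate
  have hcard : (S.card : ℝ) ≤ 2*(n:ℝ) := by
    have h1 : S.card ≤ (Finset.Icc (-(n:ℤ)) ((n:ℤ)-1)).card := Finset.card_filter_le _ _
    have h2 : (Finset.Icc (-(n:ℤ)) ((n:ℤ)-1)).card = 2*n := by
      rw [Int.card_Icc]
      omega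
    have : S.card ≤ 2*n := by omega
    exact_mod_cast this
  calc μ B ≤ μ ((B ∩ T) ∪ Tᶜ) := measure_mono (fun z hz => by
        by_cases hzT : z ∈ T
        · exact Or.inl ⟨hz, hzT⟩
        · exact Or.inr hzT)
    _ ≤ μ (B ∩ T) + μ Tᶜ := measure_union_le _ _
    _ ≤ μ (⋃ j ∈ S, I j) + ENNReal.ofReal (δ/4) := add_le_add (measure_mono hsub) htail
    _ ≤ (∑ j ∈ S, μ (I j)) + ENNReal.ofReal (δ/4) := by
        gcongr
        exact measure_biUnion_finset_le _ _
    _ ≤ (∑ j ∈ S, (ν (I j) + ENNReal.ofReal η)) + ENNReal.ofReal (δ/4) := by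
        gcongr with j hj
        rw [hS_def, Finset.mem_filter, Finset.mem_Icc] at hj
        exact hclose j hj.1.1 (by omega)
    _ = (∑ j ∈ S, ν (I j)) + S.card • ENNReal.ofReal η + ENNReal.ofReal (δ/4) := by
        rw [Finset.sum_add_distrib, Finset.sum_const]
    _ = ν (⋃ j ∈ S, I j) + S.card • ENNReal.ofReal η + ENNReal.ofReal (δ/4) := by
        rw [measure_biUnion_finset hIdisj (fun j _ => hImeas j)]
    _ ≤ ν (thickening ε B) + ENNReal.ofReal (2*(n:ℝ)*η) + ENNReal.ofReal (δ/4) := by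
        refine add_le_add (add_le_add (measure_mono hthick) ?_) le_rfl
        rw [nsmul_eq_mul]
        calc (S.card : ℝ≥0∞) * ENNReal.ofReal η
            = ENNReal.ofReal (S.card : ℝ) * ENNReal.ofReal η := by
              rw [ENNReal.ofReal_natCast]
          _ = ENNReal.ofReal ((S.card : ℝ) * η) := by
              rw [ENNReal.ofReal_mul (by positivity)]
          _ ≤ ENNReal.ofReal (2*(n:ℝ)*η) := by
              apply ENNReal.ofReal_le_ofReal
              nlinarith
    _ ≤ ν (thickening ε B) + ENNReal.ofReal ε := by
        rw [add_assoc, ← ENNReal.ofReal_add (by positivity) (by positivity)]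
        refine add_le_add le_rfl (ENNReal.ofReal_le_ofReal ?_)
        have h2 : 2*(n:ℝ)*η ≤ δ/8 := by
          have hc : (0:ℝ) < 16*(n:ℝ)+16 := by positivity
          rw [hη_def, le_div_iff₀ (by norm_num : (0:ℝ) < 8), ← mul_div_assoc,
            div_mul_eq_mul_div, div_le_iff₀ hc]
          nlinarith [Nat.cast_nonneg (α := ℝ) n]
        linarith

private lemma class_partition (Γx : ℝ → Measure ℝ) (hmeas : Measurable Γx)
    (hprob : ∀ x, IsProbabilityMeasure (Γx x)) {δ : ℝ} (hδ : 0 < δ) :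
    ∃ E : ℕ × List ℕ → Set ℝ,
      (∀ t, MeasurableSet (E t)) ∧
      (Pairwise (Function.onFun Disjoint E)) ∧
      (⋃ t, E t) = Icc (0:ℝ) 1 ∧
      ∀ t, ∀ x ∈ E t, ∀ y ∈ E t, levyProkhorovDist (Γx x) (Γx y) ≤ δ/2 := by
  classical
  have ha : (0:ℝ) < δ/4 := by positivity
  set m : ℝ → Set ℝ → ℝ := fun x s => ((Γx x) s).toReal with hm_def
  have hm : ∀ s : Set ℝ, MeasurableSet s → Measurable (fun x => m x s) := fun s hs =>
    ENNReal.measurable_toReal.comp ((Measure.measurable_coe hs).comp hmeas)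
  have hm_ne_top : ∀ x s, (Γx x) s ≠ ∞ := fun x s => measure_ne_top _ _
  have hm_nonneg : ∀ x s, 0 ≤ m x s := fun x s => ENNReal.toReal_nonneg
  set P : ℕ → ℝ → Prop := fun n x => 1 - δ/4 < m x (Ioc (-((n:ℝ)*(δ/4))) ((n:ℝ)*(δ/4))) with hP_def
  have hex : ∀ x, ∃ n, P n x := by
    intro x
    have hμ : IsProbabilityMeasure (Γx x) := hprob x
    have hunion : (⋃ n : ℕ, Ioc (-((n:ℝ)*(δ/4))) ((n:ℝ)*(δ/4))) = univ := by
      ext z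
      simp only [mem_iUnion, mem_univ, iff_true, mem_Ioc]
      obtain ⟨n, hn⟩ := exists_nat_gt (|z|/(δ/4))
      refine ⟨n, ?_, ?_⟩
      · have : |z| < (n:ℝ)*(δ/4) := by
          rw [div_lt_iff₀ ha] at hn; linarith
        have := neg_abs_le z; linarith [abs_nonneg z, this]
      · have : |z| < (n:ℝ)*(δ/4) := by
          rw [div_lt_iff₀ ha] at hn; linarith
        linarith [le_abs_self z]
    have hmono : Monotone (fun n : ℕ => Ioc (-((n:ℝ)*(δ/4))) ((n:ℝ)*(δ/4))) := by
      intro i j hij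
      apply Ioc_subset_Ioc
      · have : (i:ℝ) ≤ (j:ℝ) := by exact_mod_cast hij
        nlinarith
      · have : (i:ℝ) ≤ (j:ℝ) := by exact_mod_cast hij
        nlinarith
    have htend := tendsto_measure_iUnion_atTop (μ := Γx x) hmono
    rw [hunion] at htend
    have h1 : (Γx x) univ = 1 := measure_univ
    rw [h1] at htend
    have htendR : Filter.Tendsto (fun n : ℕ => m x (Ioc (-((n:ℝ)*(δ/4))) ((n:ℝ)*(δ/4))))
        Filter.atTop (nhds 1) := by
      have := (ENNReal.tendsto_toReal (by norm_num : (1:ℝ≥0∞) ≠ ∞)).comp htend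
      exact this
    have h2 : ∀ᶠ n : ℕ in Filter.atTop, 1 - δ/4 < m x (Ioc (-((n:ℝ)*(δ/4))) ((n:ℝ)*(δ/4))) :=
      htendR.eventually (eventually_gt_nhds (by linarith))
    exact h2.exists
  set N : ℝ → ℕ := fun x => Nat.find (hex x) with hN_def
  set Iv : ℕ → ℕ → Set ℝ := fun n i =>
    Ioc ((((i:ℤ)-(n:ℤ)):ℝ)*(δ/4)) (((((i:ℤ)-(n:ℤ)):ℝ)+1)*(δ/4)) with hIv_def
  set flr : ℝ → ℕ → ℕ → ℕ := fun x n i => ⌊ m x (Iv n i) * ((16*(n:ℝ)+16)/δ) ⌋₊ with hflr_def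
  set E : ℕ × List ℕ → Set ℝ := fun t =>
    Icc 0 1 ∩ {x | N x = t.1 ∧ (List.range (2*t.1)).map (flr x t.1) = t.2} with hE_def
  have hPmeas : ∀ n, MeasurableSet {x | P n x} := by
    intro n
    have : {x | P n x} = (fun x => m x (Ioc (-((n:ℝ)*(δ/4))) ((n:ℝ)*(δ/4)))) ⁻¹' (Ioi (1 - δ/4)) := rfl
    rw [this]
    exact (hm _ measurableSet_Ioc) measurableSet_Ioi
  have hNmeas : ∀ n, MeasurableSet {x | N x = n} := by
    intro n
    have : {x | N x = n} = {x | P n x} ∩ ⋂ k ∈ Finset.range n, {x | ¬ P k x} := by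
      ext x
      simp only [mem_setOf_eq, mem_inter_iff, mem_iInter, Finset.mem_range, hN_def]
      rw [Nat.find_eq_iff]
    rw [this]
    exact (hPmeas n).inter (MeasurableSet.biInter (Finset.range n).countable_toSet
      (fun k _ => (hPmeas k).compl))
  have hflrmeas : ∀ n i k, MeasurableSet {x | flr x n i = k} := by
    intro n i k
    have : {x | flr x n i = k} = (fun x => flr x n i) ⁻¹' {k} := rfl
    rw [this]
    exact (((hm _ measurableSet_Ioc).mul_const _).nat_floor) (measurableSet_singleton k)
  refine ⟨E, ?_, ?_, ?_, ?_⟩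
  · -- measurability
    rintro ⟨n, l⟩
    by_cases hl : l.length = 2*n
    · have : E (n, l) = (Icc 0 1 ∩ {x | N x = n}) ∩
          ⋂ i ∈ Finset.range (2*n), {x | flr x n i = l.getD i 0} := by
        ext x
        simp only [hE_def, mem_inter_iff, mem_setOf_eq, mem_iInter, Finset.mem_range, mem_Icc]
        constructor
        · rintro ⟨h1, h2, h3⟩
          refine ⟨⟨h1, h2⟩, fun i hi => ?_⟩
          rw [← h3]
          rw [List.getD_eq_getElem _ _ (by simpa using hi)]
          simp
        · rintro ⟨⟨h1, h2⟩, h3⟩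
          refine ⟨h1, h2, ?_⟩
          apply List.ext_getElem (by simpa using hl.symm)
          intro i hi1 hi2
          have hi : i < 2*n := by simpa using hi1
          have := h3 i hi
          rw [List.getD_eq_getElem _ _ hi2] at this
          simp only [List.getElem_map, List.getElem_range]
          exact this
      rw [this]
      exact ((measurableSet_Icc.inter (hNmeas n)).inter
        (MeasurableSet.biInter (Finset.range (2*n)).countable_toSet
          (fun i _ => hflrmeas n i _)))
    · have : E (n, l) = ∅ := by
        ext x
        simp only [hE_def, mem_inter_iff, mem_setOf_eq, mem_empty_iff_false, iff_false, not_and]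
        intro _ _ hcon
        apply hl
        rw [← hcon]
        simp
      rw [this]
      exact MeasurableSet.empty
  · -- pairwise disjoint
    intro t t' htt'
    rw [Function.onFun, Set.disjoint_left]
    rintro x ⟨_, hx1, hx2⟩ ⟨_, hy1, hy2⟩
    apply htt'
    obtain ⟨n1, l1⟩ := t
    obtain ⟨n2, l2⟩ := t'
    have h1 : n1 = n2 := hx1.symm.trans hy1
    subst h1
    have h2 : l1 = l2 := hx2.symm.trans hy2
    rw [h2]
  · -- union
    ext x
    simp only [mem_iUnion, Prod.exists]
    constructor
    · rintro ⟨n, l, hx, _, _⟩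
      exact hx
    · intro hx
      exact ⟨N x, (List.range (2*(N x))).map (flr x (N x)), hx, rfl, rfl⟩
  · -- distance bound
    rintro ⟨n, l⟩ x hx y hy
    simp only [hE_def, mem_inter_iff, mem_setOf_eq] at hx hy
    obtain ⟨hx01, hxN, hxl⟩ := hx
    obtain ⟨hy01, hyN, hyl⟩ := hy
    have hμ := hprob x
    have hν := hprob y
    have hflreq : ∀ i, i < 2*n → flr x n i = flr y n i := by
      intro i hi
      have h1 : ((List.range (2*n)).map (flr x n)).getD i 0
          = ((List.range (2*n)).map (flr y n)).getD i 0 := by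
        rw [hxl, hyl]
      rw [List.getD_eq_getElem _ _ (by simpa using hi),
        List.getD_eq_getElem _ _ (by simpa using hi)] at h1
      simpa using h1
    -- tail bounds
    have htailx : (Γx x) (Ioc (-((n:ℝ)*(δ/4))) ((n:ℝ)*(δ/4)))ᶜ ≤ ENNReal.ofReal (δ/4) := by
      have hP : P n x := by rw [← hxN]; exact Nat.find_spec (hex x)
      have hT := hP
      rw [measure_compl measurableSet_Ioc (hm_ne_top x _), measure_univ]
      rw [tsub_le_iff_right]
      have : (Γx x) (Ioc (-((n:ℝ)*(δ/4))) ((n:ℝ)*(δ/4)))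
          = ENNReal.ofReal (m x (Ioc (-((n:ℝ)*(δ/4))) ((n:ℝ)*(δ/4)))) :=
        (ENNReal.ofReal_toReal (hm_ne_top x _)).symm
      rw [this, ← ENNReal.ofReal_add (by positivity) (hm_nonneg x _), ← ENNReal.ofReal_one]
      apply ENNReal.ofReal_le_ofReal
      simp only [hP_def] at hT
      linarith
    have htaily : (Γx y) (Ioc (-((n:ℝ)*(δ/4))) ((n:ℝ)*(δ/4)))ᶜ ≤ ENNReal.ofReal (δ/4) := by
      have hP : P n y := by rw [← hyN]; exact Nat.find_spec (hex y)
      have hT := hP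
      rw [measure_compl measurableSet_Ioc (hm_ne_top y _), measure_univ]
      rw [tsub_le_iff_right]
      have : (Γx y) (Ioc (-((n:ℝ)*(δ/4))) ((n:ℝ)*(δ/4)))
          = ENNReal.ofReal (m y (Ioc (-((n:ℝ)*(δ/4))) ((n:ℝ)*(δ/4)))) :=
        (ENNReal.ofReal_toReal (hm_ne_top y _)).symm
      rw [this, ← ENNReal.ofReal_add (by positivity) (hm_nonneg y _), ← ENNReal.ofReal_one]
      apply ENNReal.ofReal_le_ofReal
      simp only [hP_def] at hT
      linarith
    have hcloseflr : ∀ u v : ℝ, 0 ≤ u → 0 ≤ v →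
        ⌊u * ((16*(n:ℝ)+16)/δ)⌋₊ = ⌊v * ((16*(n:ℝ)+16)/δ)⌋₊ → u ≤ v + δ/(16*(n:ℝ)+16) := by
      intro u v hu hv hfl
      have hc : (0:ℝ) < (16*(n:ℝ)+16)/δ := by positivity
      have h1 : u * ((16*(n:ℝ)+16)/δ) < ⌊u * ((16*(n:ℝ)+16)/δ)⌋₊ + 1 :=
        Nat.lt_floor_add_one _
      have h2 : (⌊v * ((16*(n:ℝ)+16)/δ)⌋₊ : ℝ) ≤ v * ((16*(n:ℝ)+16)/δ) :=
        Nat.floor_le (by positivity)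
      rw [hfl] at h1
      have h3 : u * ((16*(n:ℝ)+16)/δ) < v * ((16*(n:ℝ)+16)/δ) + 1 := by linarith
      have h5 : u - v < 1 / ((16*(n:ℝ)+16)/δ) := by
        rw [lt_div_iff₀ hc]
        nlinarith
      rw [one_div_div] at h5
      linarith
    have hclose : ∀ j : ℤ, -(n:ℤ) ≤ j → j < (n:ℤ) →
        (Γx x) (Ioc ((j:ℝ)*(δ/4)) (((j:ℝ)+1)*(δ/4)))
          ≤ (Γx y) (Ioc ((j:ℝ)*(δ/4)) (((j:ℝ)+1)*(δ/4))) + ENNReal.ofReal (δ/(16*(n:ℝ)+16)) := by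
      intro j hj1 hj2
      set i : ℕ := (j + n).toNat with hi_def
      have hji : ((i:ℤ) - (n:ℤ)) = j := by omega
      have hilt : i < 2*n := by omega
      have hIvj : Iv n i = Ioc ((j:ℝ)*(δ/4)) (((j:ℝ)+1)*(δ/4)) := by
        have hr : ((i:ℝ) - (n:ℝ)) = (j:ℝ) := by exact_mod_cast hji
        simp only [hIv_def]
        push_cast
        rw [hr]
      have heq := hflreq i hilt
      simp only [hflr_def] at heq
      have hle := hcloseflr (m x (Iv n i)) (m y (Iv n i)) (hm_nonneg x _) (hm_nonneg y _) heq
      rw [hIvj] at hle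
      have hx' : (Γx x) (Ioc ((j:ℝ)*(δ/4)) (((j:ℝ)+1)*(δ/4)))
          = ENNReal.ofReal (m x (Ioc ((j:ℝ)*(δ/4)) (((j:ℝ)+1)*(δ/4)))) :=
        (ENNReal.ofReal_toReal (hm_ne_top x _)).symm
      have hy' : (Γx y) (Ioc ((j:ℝ)*(δ/4)) (((j:ℝ)+1)*(δ/4)))
          = ENNReal.ofReal (m y (Ioc ((j:ℝ)*(δ/4)) (((j:ℝ)+1)*(δ/4)))) :=
        (ENNReal.ofReal_toReal (hm_ne_top y _)).symm
      rw [hx', hy', ← ENNReal.ofReal_add (hm_nonneg y _) (by positivity)]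
      exact ENNReal.ofReal_le_ofReal hle
    exact lp_key (Γx x) (Γx y) hδ n htailx hclose
set_option maxHeartbeats 1000000 in
/-- For every probability measure `Γ` on `[0,1]²` with a disintegration
`{Γx x}` along the first coordinate, and every `δ > 0`, there are finitely many
intervals `J 1, …, J h` partitioning `[0,1]` and a measurable set `X` with
`λ(X) < δ` such that on each `J i \ X` the fibers are pairwise `δ`-close in the
Lévy–Prokhorov distance. -/
theorem stmt4 (Γ : Measure (ℝ × ℝ)) [IsProbabilityMeasure Γ]
    (Γx : ℝ → Measure ℝ) (hmeas : Measurable Γx)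
    (hprob : ∀ x, IsProbabilityMeasure (Γx x))
    (hdis : ∀ B : Set (ℝ × ℝ), MeasurableSet B →
      Γ B = ∫⁻ x in Icc (0 : ℝ) 1, Γx x {y | (x, y) ∈ B})
    (δ : ℝ) (hδ : 0 < δ) :
    ∃ (h : ℕ) (J : Fin h → Set ℝ),
      (∀ i, (J i).OrdConnected) ∧
      (∀ i j, i ≠ j → Disjoint (J i) (J j)) ∧
      (⋃ i, J i) = Icc (0 : ℝ) 1 ∧
      ∃ X : Set ℝ, MeasurableSet X ∧ X ⊆ Icc 0 1 ∧ volume X < ENNReal.ofReal δ ∧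
        ∀ i, ∀ x ∈ J i \ X, ∀ y ∈ J i \ X, levyProkhorovDist (Γx x) (Γx y) < δ := by
  classical
  obtain ⟨E, hEmeas, hEdisj, hEunion, hEdist⟩ := class_partition Γx hmeas hprob hδ
  have hEsub : ∀ t, E t ⊆ Icc (0:ℝ) 1 := fun t => hEunion ▸ subset_iUnion E t
  have hvol1 : volume (Icc (0:ℝ) 1) = 1 := by simp
  have hsum : ∑' t, volume (E t) = 1 := by
    rw [← measure_iUnion hEdisj hEmeas, hEunion, hvol1]
  have hd2 : (0:ℝ) < δ/2 := by positivity
  -- find a finite family capturing most of the mass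
  have hFex : ∃ F : Finset (ℕ × List ℕ),
      1 - ENNReal.ofReal (δ/2) < ∑ t ∈ F, volume (E t) := by
    have h1 : 1 - ENNReal.ofReal (δ/2) < ⨆ F : Finset (ℕ × List ℕ), ∑ t ∈ F, volume (E t) := by
      rw [← ENNReal.tsum_eq_iSup_sum, hsum]
      exact ENNReal.sub_lt_self ENNReal.one_ne_top one_ne_zero
        (by simp [ENNReal.ofReal_eq_zero]; linarith)
    exact lt_iSup_iff.mp h1
  obtain ⟨F, hF⟩ := hFex
  have hEfin : ∀ t, volume (E t) ≠ ∞ := fun t =>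
    (lt_of_le_of_lt (measure_mono (hEsub t)) (by rw [hvol1]; exact ENNReal.one_lt_top)).ne
  set ε' : ℝ≥0∞ := ENNReal.ofReal (δ/(2*((F.card:ℝ)+1))) with hε'_def
  have hε'pos : ε' ≠ 0 := by
    simp only [hε'_def, ne_eq, ENNReal.ofReal_eq_zero, not_le]
    positivity
  -- inner regular compacts
  have hKex : ∀ t : ℕ × List ℕ, ∃ K, K ⊆ E t ∧ IsCompact K ∧
      volume (E t) < volume K + ε' :=
    fun t => (hEmeas t).exists_isCompact_lt_add (hEfin t) hε'pos
  choose K hKsub hKcomp hKvol using hKex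
  have hKmeas : ∀ t, MeasurableSet (K t) := fun t => (hKcomp t).isClosed.measurableSet
  have hKdiff : ∀ t, volume (E t \ K t) ≤ ε' := by
    intro t
    rw [measure_diff (hKsub t) (hKmeas t).nullMeasurableSet
      (ne_top_of_le_ne_top (hEfin t) (measure_mono (hKsub t)))]
    exact tsub_le_iff_right.mpr (by rw [add_comm]; exact (hKvol t).le)
  -- separation between the finitely many compacts
  have hsep2 : ∀ p : (ℕ × List ℕ) × (ℕ × List ℕ), ∃ d : ℝ, 0 < d ∧
      (p ∈ F.offDiag → ∀ u ∈ K p.1, ∀ v ∈ K p.2, d ≤ dist u v) := by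
    intro p
    by_cases hp : p ∈ F.offDiag
    · have hne : p.1 ≠ p.2 := (Finset.mem_offDiag.mp hp).2.2
      have hdisj : Disjoint (K p.1) (K p.2) :=
        Set.disjoint_of_subset (hKsub p.1) (hKsub p.2) (hEdisj hne)
      obtain ⟨r, hr, hthick⟩ := hdisj.exists_thickenings (hKcomp p.1) (hKcomp p.2).isClosed
      refine ⟨r, hr, fun _ u hu v hv => ?_⟩
      by_contra hlt
      push_neg at hlt
      have h1 : v ∈ thickening r (K p.1) := by
        rw [mem_thickening_iff]
        exact ⟨u, hu, by rw [dist_comm]; exact hlt⟩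
      have h2 : v ∈ thickening r (K p.2) := self_subset_thickening hr _ hv
      exact (Set.disjoint_left.mp hthick h1) h2
    · exact ⟨1, one_pos, fun h => absurd h hp⟩
  choose g hg1 hg2 using hsep2
  obtain ⟨d, hdpos, hdle⟩ : ∃ d : ℝ, 0 < d ∧ ∀ p ∈ F.offDiag, d ≤ g p := by
    by_cases hne : F.offDiag.Nonempty
    · exact ⟨F.offDiag.inf' hne g, (Finset.lt_inf'_iff hne).mpr fun p _ => hg1 p,
        fun p hp => Finset.inf'_le _ hp⟩
    · exact ⟨1, one_pos, fun p hp => absurd hp (fun h => hne ⟨p, h⟩)⟩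
  -- the intervals
  obtain ⟨w, hwpos, hw1, hwd⟩ : ∃ w : ℝ, 0 < w ∧ w ≤ 1 ∧ w < d :=
    ⟨min (d/2) 1, lt_min (by positivity) one_pos, min_le_right _ _,
      lt_of_le_of_lt (min_le_left _ _) (by linarith)⟩
  obtain ⟨hh, hhh⟩ : ∃ hh : ℕ, (1:ℝ)/w < hh :=
    ⟨⌈1/w⌉₊ + 1, lt_of_le_of_lt (Nat.le_ceil _) (by push_cast; linarith)⟩
  set J : Fin hh → Set ℝ := fun i => Icc 0 1 ∩ Ico ((i:ℝ)*w) (((i:ℝ)+1)*w) with hJ_def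
  refine ⟨hh, J, ?_, ?_, ?_, ?_⟩
  · intro i
    exact Set.ordConnected_Icc.inter Set.ordConnected_Ico
  · intro i j hij
    apply Set.disjoint_of_subset inter_subset_right inter_subset_right
    rw [Set.Ico_disjoint_Ico]
    rcases lt_or_gt_of_ne (fun h : (i:ℕ) = (j:ℕ) => hij (Fin.ext h)) with h | h
    · have hc : ((i:ℕ):ℝ) + 1 ≤ ((j:ℕ):ℝ) := by exact_mod_cast h
      exact le_trans (min_le_left _ _) (le_trans (by nlinarith) (le_max_right _ _))
    · have hc : ((j:ℕ):ℝ) + 1 ≤ ((i:ℕ):ℝ) := by exact_mod_cast h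
      exact le_trans (min_le_right _ _) (le_trans (by nlinarith) (le_max_left _ _))
  · apply subset_antisymm
    · exact iUnion_subset fun i => inter_subset_left
    · intro x hx
      obtain ⟨hx0, hx1⟩ := hx
      set i : ℕ := ⌊x/w⌋₊ with hi_def
      have hile : (i:ℝ) ≤ x/w := Nat.floor_le (by positivity)
      have hilt : x/w < (i:ℝ) + 1 := Nat.lt_floor_add_one _
      have hiub : i < hh := by
        have hxw : x/w ≤ 1/w := by gcongr
        have h1 : (i:ℝ) < (hh:ℝ) := lt_of_le_of_lt (le_trans hile hxw) hhh
        exact_mod_cast h1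
      refine mem_iUnion.mpr ⟨⟨i, hiub⟩, ⟨hx0, hx1⟩, ?_, ?_⟩
      · simpa using (le_div_iff₀ hwpos).mp hile
      · have := (div_lt_iff₀ hwpos).mp hilt
        simpa using this
  · -- the exceptional set
    set X : Set ℝ := Icc 0 1 \ ⋃ t ∈ F, K t with hX_def
    have hXmeas : MeasurableSet X :=
      measurableSet_Icc.diff (F.measurableSet_biUnion (fun t _ => hKmeas t))
    have hXsub : X ⊆ Icc 0 1 := diff_subset
    have hXvol : volume X < ENNReal.ofReal δ := by
      have hU : (⋃ t ∈ F, E t) ⊆ Icc (0:ℝ) 1 := iUnion₂_subset fun t _ => hEsub t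
      have hUmeas : MeasurableSet (⋃ t ∈ F, E t) := F.measurableSet_biUnion fun t _ => hEmeas t
      have hUvol : volume (⋃ t ∈ F, E t) = ∑ t ∈ F, volume (E t) :=
        measure_biUnion_finset (fun a _ b _ hab => hEdisj hab) (fun t _ => hEmeas t)
      have hA : volume (Icc (0:ℝ) 1 \ ⋃ t ∈ F, E t) < ENNReal.ofReal (δ/2) := by
        have hUfin : volume (⋃ t ∈ F, E t) ≠ ∞ :=
          (lt_of_le_of_lt (measure_mono hU) (by rw [hvol1]; exact ENNReal.one_lt_top)).ne
        rw [measure_diff hU hUmeas.nullMeasurableSet hUfin, hvol1, hUvol]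
        have hsle : ∑ t ∈ F, volume (E t) ≤ 1 := hsum ▸ ENNReal.sum_le_tsum F
        rw [ENNReal.sub_lt_iff_lt_right (ne_top_of_le_ne_top ENNReal.one_ne_top hsle) hsle]
        calc (1:ℝ≥0∞) ≤ (1 - ENNReal.ofReal (δ/2)) + ENNReal.ofReal (δ/2) := le_tsub_add
          _ < (∑ t ∈ F, volume (E t)) + ENNReal.ofReal (δ/2) :=
            ENNReal.add_lt_add_right ENNReal.ofReal_ne_top hF
          _ = ENNReal.ofReal (δ/2) + ∑ t ∈ F, volume (E t) := add_comm _ _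
      have hB : volume (⋃ t ∈ F, (E t \ K t)) ≤ (F.card : ℝ≥0∞) * ε' := by
        calc volume (⋃ t ∈ F, (E t \ K t)) ≤ ∑ t ∈ F, volume (E t \ K t) :=
            measure_biUnion_finset_le _ _
          _ ≤ ∑ _t ∈ F, ε' := Finset.sum_le_sum fun t _ => hKdiff t
          _ = (F.card : ℝ≥0∞) * ε' := by rw [Finset.sum_const, nsmul_eq_mul]
      have hXsub2 : X ⊆ (Icc (0:ℝ) 1 \ ⋃ t ∈ F, E t) ∪ ⋃ t ∈ F, (E t \ K t) := by
        rintro x ⟨hx01, hxK⟩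
        by_cases hxE : x ∈ ⋃ t ∈ F, E t
        · obtain ⟨t, htF, hxt⟩ := mem_iUnion₂.mp hxE
          refine Or.inr (mem_iUnion₂.mpr ⟨t, htF, hxt, fun hc => hxK ?_⟩)
          exact mem_iUnion₂.mpr ⟨t, htF, hc⟩
        · exact Or.inl ⟨hx01, hxE⟩
      calc volume X ≤ volume (Icc (0:ℝ) 1 \ ⋃ t ∈ F, E t) + volume (⋃ t ∈ F, (E t \ K t)) :=
          le_trans (measure_mono hXsub2) (measure_union_le _ _)
        _ ≤ volume (Icc (0:ℝ) 1 \ ⋃ t ∈ F, E t) + (F.card : ℝ≥0∞) * ε' :=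
          add_le_add le_rfl hB
        _ < ENNReal.ofReal (δ/2) + (F.card : ℝ≥0∞) * ε' :=
          ENNReal.add_lt_add_right
            (ENNReal.mul_ne_top (ENNReal.natCast_ne_top _) ENNReal.ofReal_ne_top) hA
        _ ≤ ENNReal.ofReal δ := by
          have hcard0 : (0:ℝ) ≤ (F.card:ℝ) := Nat.cast_nonneg _
          have hcc : (F.card : ℝ≥0∞) * ε' ≤ ENNReal.ofReal (δ/2) := by
            rw [hε'_def, ← ENNReal.ofReal_natCast F.card,
              ← ENNReal.ofReal_mul hcard0]
            apply ENNReal.ofReal_le_ofReal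
            rw [← mul_div_assoc, div_le_div_iff₀ (by positivity) (by norm_num : (0:ℝ) < 2)]
            nlinarith
          calc ENNReal.ofReal (δ/2) + (F.card : ℝ≥0∞) * ε'
              ≤ ENNReal.ofReal (δ/2) + ENNReal.ofReal (δ/2) := add_le_add le_rfl hcc
            _ = ENNReal.ofReal (δ/2 + δ/2) :=
              (ENNReal.ofReal_add (le_of_lt hd2) (le_of_lt hd2)).symm
            _ = ENNReal.ofReal δ := by norm_num
    refine ⟨X, hXmeas, hXsub, hXvol, ?_⟩
    rintro i x ⟨hxJ, hxX⟩ y ⟨hyJ, hyX⟩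
    obtain ⟨hx01, hxI⟩ := hxJ
    obtain ⟨hy01, hyI⟩ := hyJ
    have hxK : x ∈ ⋃ t ∈ F, K t := by
      by_contra hc
      exact hxX ⟨hx01, hc⟩
    have hyK : y ∈ ⋃ t ∈ F, K t := by
      by_contra hc
      exact hyX ⟨hy01, hc⟩
    obtain ⟨t, htF, hxt⟩ := mem_iUnion₂.mp hxK
    obtain ⟨t', ht'F, hyt⟩ := mem_iUnion₂.mp hyK
    have hxy : dist x y < d := by
      rw [Real.dist_eq]
      have h1 := hxI.1
      have h2 := hxI.2
      have h3 := hyI.1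
      have h4 := hyI.2
      rw [abs_lt]
      constructor <;> nlinarith
    have htt' : t = t' := by
      by_contra hne
      have hp : (t, t') ∈ F.offDiag := Finset.mem_offDiag.mpr ⟨htF, ht'F, hne⟩
      have := le_trans (hdle _ hp) (hg2 (t, t') hp x hxt y hyt)
      linarith
    subst htt'
    have hle := hEdist t x (hKsub t hxt) y (hKsub t hyt)
    linarith
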